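/- Define sequences c_{k,q} for primes q by: c_{k,2} = c_k (where c₀=1, c_k = (1/k)∑_{j=2}^k c_{k-j}Z(j)), and for consecutive primes p < q, c_{0,q} = 1 and c_{k,q} = c_{k,p} - p^{-1} c_{k-1,p} for k ≥ 1. Define A_{k,q} similarly with A_{k,2} = Z(k) for k≥2, A_{1,2}=0, and A_{k,q} = A_{k,p} - p^{-k}. Then for every prime q and every k ≥ 1, k·c_{k,q} = ∑_{j=1}^{k} c_{k-j,q} A_{j,q}. -/

import Mathlib

open Filter Real Asymptotics
open scoped Classical Topology BigOperators

/-- The finite set of primes `p ≤ x`, for a real number `x`. -/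
noncomputable def primesUpTo (x : ℝ) : Finset ℕ :=
  (Finset.range (⌊x⌋₊ + 1)).filter Nat.Prime

/-- `n` is `x`-smooth: `n` is a positive integer all of whose prime factors are `≤ x`
(equivalently, `P⁺(n) ≤ x`). -/
def IsSmooth (x : ℝ) (n : ℕ) : Prop := 0 < n ∧ ∀ p ∈ n.primeFactors, (p : ℝ) ≤ x

/-- `Ω n`: number of prime factors of `n` counted with multiplicity. -/
def bigOmega (n : ℕ) : ℕ := n.primeFactorsList.length

/-- Truncated prime zeta function `Z(t, x) = ∑_{p ≤ x} p^{-t}`. -/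
noncomputable def Ztr (t x : ℝ) : ℝ := ∑ p ∈ primesUpTo x, (p : ℝ) ^ (-t)

/-- Prime zeta function `Z(j) = ∑_p p^{-j}`. -/
noncomputable def Zp (j : ℕ) : ℝ := ∑' p : Nat.Primes, (1 : ℝ) / ((p : ℕ) : ℝ) ^ j

lemma tel_aux (p : ℝ) (c c' : ℕ → ℝ) (h0 : c' 0 = c 0)
    (hstep : ∀ m, 1 ≤ m → c' m = c m - (1 / p) * c (m - 1)) :
    ∀ n : ℕ, ∑ i ∈ Finset.range (n + 1), c' (n - i) * (1 / p ^ (i + 1))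
      = (1 / p) * c n := by
  intro n
  induction n with
  | zero => simp [h0]; ring
  | succ n ihn =>
    rw [Finset.sum_range_succ']
    have e1 : ∀ i ∈ Finset.range (n + 1),
        c' (n + 1 - (i + 1)) * (1 / p ^ (i + 1 + 1))
        = (1 / p) * (c' (n - i) * (1 / p ^ (i + 1))) := by
      intro i hi
      have h2 : n + 1 - (i + 1) = n - i := by omega
      rw [h2, pow_succ']
      simp [one_div, mul_inv]
      ring
    rw [Finset.sum_congr rfl e1, ← Finset.mul_sum, ihn]
    have hs : c' (n + 1) = c (n + 1) - (1 / p) * c n := by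
      simpa using hstep (n + 1) (by omega)
    simp [hs]
    ring

lemma step_lemma (p : ℝ) (c c' a a' : ℕ → ℝ) (h0 : c' 0 = c 0)
    (hstep : ∀ m, 1 ≤ m → c' m = c m - (1 / p) * c (m - 1))
    (hastep : ∀ j, 1 ≤ j → a' j = a j - 1 / p ^ j)
    (hrec : ∀ k : ℕ, 1 ≤ k → (k : ℝ) * c k = ∑ j ∈ Finset.Icc 1 k, c (k - j) * a j) :
    ∀ k : ℕ, 1 ≤ k → (k : ℝ) * c' k = ∑ j ∈ Finset.Icc 1 k, c' (k - j) * a' j := by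
  have hIcc : ∀ (f : ℕ → ℝ) (n : ℕ), ∑ j ∈ Finset.Icc 1 (n+1), f j
      = ∑ i ∈ Finset.range (n+1), f (i + 1) := by
    intro f n
    rw [← Finset.Ico_add_one_right_eq_Icc, Finset.sum_Ico_eq_sum_range]
    exact Finset.sum_congr rfl fun i _ => by rw [Nat.add_comm]
  intro k hk
  obtain ⟨n, rfl⟩ : ∃ n, k = n + 1 := ⟨k - 1, by omega⟩
  rw [hIcc]
  have ha' : ∀ i ∈ Finset.range (n+1), c' (n + 1 - (i+1)) * a' (i+1)
      = c' (n - i) * a (i+1) - c' (n - i) * (1 / p ^ (i+1)) := by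
    intro i hi
    have h1 : n + 1 - (i + 1) = n - i := by omega
    rw [h1, hastep (i+1) (by omega)]
    ring
  rw [Finset.sum_congr rfl ha', Finset.sum_sub_distrib, tel_aux p c c' h0 hstep n]
  have hsplit : ∑ i ∈ Finset.range (n+1), c' (n - i) * a (i+1)
      = ∑ i ∈ Finset.range (n+1), c (n - i) * a (i+1)
        - (1/p) * ∑ i ∈ Finset.range n, c (n - 1 - i) * a (i+1) := by
    rw [Finset.sum_range_succ, Finset.sum_range_succ (fun i => c (n - i) * a (i+1))]
    have e2 : ∀ i ∈ Finset.range n, c' (n - i) * a (i+1)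
        = c (n - i) * a (i+1) - (1/p) * (c (n - 1 - i) * a (i+1)) := by
      intro i hi
      simp only [Finset.mem_range] at hi
      rw [hstep (n - i) (by omega)]
      have h3 : n - i - 1 = n - 1 - i := by omega
      rw [h3]; ring
    rw [Finset.sum_congr rfl e2, Finset.sum_sub_distrib, Finset.mul_sum]
    simp [h0]
    ring
  rw [hsplit]
  have h1 : ∑ i ∈ Finset.range (n+1), c (n - i) * a (i+1) = ((n:ℝ)+1) * c (n+1) := by
    have hr := hrec (n+1) (by omega)
    rw [hIcc] at hr
    have e : ∀ i ∈ Finset.range (n+1), c (n + 1 - (i+1)) * a (i+1) = c (n - i) * a (i+1) := by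
      intro i hi; congr 2; omega
    rw [Finset.sum_congr rfl e] at hr
    push_cast at hr
    linarith [hr]
  have h2 : ∑ i ∈ Finset.range n, c (n - 1 - i) * a (i+1) = (n : ℝ) * c n := by
    rcases Nat.eq_zero_or_pos n with hn | hn
    · subst hn; simp
    · have hr := hrec n hn
      obtain ⟨m, rfl⟩ : ∃ m, n = m + 1 := ⟨n - 1, by omega⟩
      rw [hIcc] at hr
      have e : ∀ i ∈ Finset.range (m+1), c (m + 1 - (i+1)) * a (i+1)
          = c (m + 1 - 1 - i) * a (i+1) := by
        intro i hi; congr 2; omega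
      rw [← Finset.sum_congr rfl e, ← hr]
  rw [h1, h2, hstep (n+1) (by omega)]
  push_cast
  simp
  ring

theorem ckq_recursion (c : ℕ → ℝ) (hc0 : c 0 = 1)
    (hc : ∀ k, 1 ≤ k → c k = (1 / (k : ℝ)) * ∑ j ∈ Finset.Icc 2 k, c (k - j) * Zp j)
    (C : ℕ → ℕ → ℝ) (hC2 : ∀ k, C k 2 = c k)
    (hCstep : ∀ p q : ℕ, p.Prime → q.Prime → p < q → (∀ r, p < r → r < q → ¬ r.Prime) →
      C 0 q = 1 ∧ ∀ k, 1 ≤ k → C k q = C k p - (1 / (p : ℝ)) * C (k - 1) p)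
    (A : ℕ → ℕ → ℝ)
    (hA2 : ∀ k, 2 ≤ k → A k 2 = Zp k) (hA12 : A 1 2 = 0)
    (hAstep : ∀ p q : ℕ, p.Prime → q.Prime → p < q → (∀ r, p < r → r < q → ¬ r.Prime) →
      ∀ k, 1 ≤ k → A k q = A k p - 1 / (p : ℝ) ^ k) :
    ∀ q : ℕ, q.Prime → ∀ k : ℕ, 1 ≤ k →
      (k : ℝ) * C k q = ∑ j ∈ Finset.Icc 1 k, C (k - j) q * A j q := by
  -- predecessor prime
  have hpred : ∀ q : ℕ, q.Prime → q ≠ 2 →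
      ∃ p : ℕ, p.Prime ∧ p < q ∧ ∀ r, p < r → r < q → ¬ r.Prime := by
    intro q hq hq2
    have hq2' : 2 < q := lt_of_le_of_ne hq.two_le (Ne.symm hq2)
    have h2P : 2 ∈ (Finset.range q).filter Nat.Prime := by
      simp only [Finset.mem_filter, Finset.mem_range]
      exact ⟨hq2', Nat.prime_two⟩
    set P := (Finset.range q).filter Nat.Prime with hP
    refine ⟨P.max' ⟨2, h2P⟩, ?_, ?_, ?_⟩
    · exact (Finset.mem_filter.mp (P.max'_mem ⟨2, h2P⟩)).2
    · exact Finset.mem_range.mp (Finset.mem_filter.mp (P.max'_mem ⟨2, h2P⟩)).1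
    · intro r h1 h2 hr
      exact absurd (P.le_max' r (Finset.mem_filter.mpr
        ⟨Finset.mem_range.mpr h2, hr⟩)) (not_le.mpr h1)
  -- C 0 q = 1 for all primes q
  have hC0 : ∀ q : ℕ, q.Prime → C 0 q = 1 := by
    intro q hq
    by_cases h : q = 2
    · rw [h, hC2, hc0]
    · obtain ⟨p, hp, hpq, hgap⟩ := hpred q hq h
      exact (hCstep p q hp hq hpq hgap).1
  -- base case q = 2
  have hbase : ∀ k : ℕ, 1 ≤ k → (k : ℝ) * C k 2 = ∑ j ∈ Finset.Icc 1 k, C (k - j) 2 * A j 2 := by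
    intro k hk
    simp only [hC2]
    rw [Finset.Icc_eq_cons_Ioc hk, Finset.sum_cons, hA12, mul_zero, zero_add,
      ← Finset.Icc_add_one_left_eq_Ioc, one_add_one_eq_two]
    have e : ∀ j ∈ Finset.Icc 2 k, c (k - j) * A j 2 = c (k - j) * Zp j := by
      intro j hj
      rw [hA2 j (Finset.mem_Icc.mp hj).1]
    rw [Finset.sum_congr rfl e, hc k hk, ← mul_assoc, mul_one_div,
      div_self (by positivity), one_mul]
  -- strong induction on q
  intro q
  induction q using Nat.strong_induction_on with
  | _ q ih =>
    intro hq
    by_cases h : q = 2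
    · subst h; exact hbase
    · obtain ⟨p, hp, hpq, hgap⟩ := hpred q hq h
      obtain ⟨hC0q, hCk⟩ := hCstep p q hp hq hpq hgap
      have hAk := hAstep p q hp hq hpq hgap
      exact step_lemma (p : ℝ) (fun m => C m p) (fun m => C m q) (fun j => A j p)
        (fun j => A j q) (by rw [hC0 q hq, hC0 p hp]) hCk hAk (ih p hpq hp)
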